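/- Let (X,d) be a separable metric space and let λ be a locally finite Borel regular measure over X of Vitali type with respect to d. Then for every locally finite Borel regular measure μ over X and every λ-measurable set A ⊂ X, μ_λ(A) = ∫_A D(μ,λ,x) dλ(x), where D(μ,λ,x) := lim_{r→0} μ(B(x,r))/λ(B(x,r)) (which exists and is finite for λ-almost every x). -/

import Mathlib

open MeasureTheory Metric Filter Set
open scoped ENNReal Topology NNReal

/-- `μ_λ(A) := inf { μ(C) : C Borel, λ(A \ C) = 0 }`. -/
noncomputable def relPart {X : Type*} [MeasurableSpace X]
    (μ lam : Measure X) (A : Set X) : ℝ≥0∞ :=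
  ⨅ (C : Set X) (_ : MeasurableSet C) (_ : lam (A \ C) = 0), μ C

/-- A measure `lam` is of Vitali type with respect to the distance: for every set `A`
and every family `ℬ` of (closed) balls, recorded as pairs (center, radius), such that every
point of `A` is the center of balls of `ℬ` of arbitrarily small radius, there is a countable
disjointed subfamily covering `lam`-almost all of `A`. -/
def IsVitaliType {X : Type*} [MetricSpace X] [MeasurableSpace X] (lam : Measure X) : Prop :=
  ∀ (A : Set X) (ℬ : Set (X × ℝ)),
    (∀ p ∈ ℬ, 0 < p.2) →
    (∀ x ∈ A, ∀ ε > 0, ∃ r : ℝ, 0 < r ∧ r < ε ∧ (x, r) ∈ ℬ) →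
    ∃ F ⊆ ℬ, F.Countable ∧
      (F.PairwiseDisjoint fun p => closedBall p.1 p.2) ∧
      lam (A \ ⋃ p ∈ F, closedBall p.1 p.2) = 0

/-- Lower derivative `D̲(μ,λ,x) = liminf_{r→0⁺} μ(B(x,r))/λ(B(x,r))`
(in `ℝ≥0∞`, with the convention `0/0 = 0`). -/
noncomputable def lowerDeriv {X : Type*} [MetricSpace X] [MeasurableSpace X]
    (μ lam : Measure X) (x : X) : ℝ≥0∞ :=
  Filter.liminf (fun r : ℝ => μ (closedBall x r) / lam (closedBall x r)) (𝓝[>] (0:ℝ))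

/-- Upper derivative `D̄(μ,λ,x) = limsup_{r→0⁺} μ(B(x,r))/λ(B(x,r))`
(in `ℝ≥0∞`, with the convention `0/0 = 0`). It coincides `λ`-a.e. with the
derivative `D(μ,λ,x)`, which exists `λ`-a.e. (first part of the conclusion below). -/
noncomputable def upperDeriv {X : Type*} [MetricSpace X] [MeasurableSpace X]
    (μ lam : Measure X) (x : X) : ℝ≥0∞ :=
  Filter.limsup (fun r : ℝ => μ (closedBall x r) / lam (closedBall x r)) (𝓝[>] (0:ℝ))

/-- Build a Vitali family from the Vitali-type hypothesis, with sets all closed balls. -/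
noncomputable def vitaliTypeFamily {X : Type*} [MetricSpace X]
    [MeasurableSpace X] [BorelSpace X]
    (lam : Measure X) (hVit : IsVitaliType lam) : VitaliFamily lam where
  setsAt x := (fun r => closedBall x r) '' Ioi (0 : ℝ)
  measurableSet := by
    rintro x s ⟨r, hr, rfl⟩
    exact measurableSet_closedBall
  nonempty_interior := by
    rintro x s ⟨r, hr, rfl⟩
    exact ⟨x, ball_subset_interior_closedBall (mem_ball_self hr)⟩
  nontrivial x ε hε := ⟨closedBall x ε, ⟨ε, hε, rfl⟩, Subset.rfl⟩
  covering := by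
    intro s f hf hfine
    set ℬ : Set (X × ℝ) := {p | p.1 ∈ s ∧ 0 < p.2 ∧ closedBall p.1 p.2 ∈ f p.1} with hB
    have hpos : ∀ p ∈ ℬ, 0 < p.2 := fun p hp => hp.2.1
    have hsmall : ∀ x ∈ s, ∀ ε > (0:ℝ), ∃ r : ℝ, 0 < r ∧ r < ε ∧ (x, r) ∈ ℬ := by
      intro x hx ε hε
      obtain ⟨t, htf, hts⟩ := hfine x hx (ε / 2) (by linarith)
      obtain ⟨r, hr, rfl⟩ := hf x hx htf
      refine ⟨min r (ε / 2), lt_min hr (by linarith), (min_le_right _ _).trans_lt (by linarith),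
        hx, lt_min hr (by linarith), ?_⟩
      have hball : closedBall x (min r (ε / 2)) = closedBall x r := by
        apply Subset.antisymm (closedBall_subset_closedBall (min_le_left _ _))
        intro y hy
        have h1 : dist y x ≤ ε / 2 := hts hy
        exact le_min hy h1
      rw [hball]; exact htf
    obtain ⟨F, hFB, _, hFd, hFm⟩ := hVit s ℬ hpos hsmall
    refine ⟨(fun p : X × ℝ => (p.1, closedBall p.1 p.2)) '' F, ?_, ?_, ?_, ?_⟩
    · rintro q ⟨p, hp, rfl⟩
      exact (hFB hp).1
    · rintro a ⟨p, hp, rfl⟩ b ⟨q, hq, rfl⟩ hne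
      have hpq : p ≠ q := by rintro rfl; exact hne rfl
      exact hFd hp hq hpq
    · rintro q ⟨p, hp, rfl⟩
      exact (hFB hp).2.2
    · rw [Set.biUnion_image]
      exact hFm

theorem stmt4 {X : Type*} [MetricSpace X] [TopologicalSpace.SeparableSpace X]
    [MeasurableSpace X] [BorelSpace X]
    (lam : Measure X) [IsLocallyFiniteMeasure lam] (hVit : IsVitaliType lam)
    (μ : Measure X) [IsLocallyFiniteMeasure μ] :
    (∀ᵐ x ∂lam, upperDeriv μ lam x < ∞ ∧
      Filter.Tendsto (fun r : ℝ => μ (closedBall x r) / lam (closedBall x r))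
        (𝓝[>] (0:ℝ)) (𝓝 (upperDeriv μ lam x))) ∧
    ∀ A : Set X, NullMeasurableSet A lam →
      relPart μ lam A = ∫⁻ x in A, upperDeriv μ lam x ∂lam := by
  haveI : SecondCountableTopology X := UniformSpace.secondCountable_of_separable X
  set v : VitaliFamily lam := vitaliTypeFamily lam hVit with hv
  have htend : ∀ x : X, Tendsto (fun r : ℝ => closedBall x r) (𝓝[>] (0:ℝ)) (v.filterAt x) := by
    intro x
    rw [VitaliFamily.tendsto_filterAt_iff]
    constructor
    · filter_upwards [self_mem_nhdsWithin] with r hr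
      exact ⟨r, hr, rfl⟩
    · intro ε hε
      filter_upwards [Ioo_mem_nhdsGT_of_mem ⟨le_refl (0:ℝ), hε⟩] with r hr
      exact closedBall_subset_closedBall hr.2.le
  have key := v.ae_tendsto_rnDeriv μ
  have hae : ∀ᵐ x ∂lam, Tendsto (fun r : ℝ => μ (closedBall x r) / lam (closedBall x r))
      (𝓝[>] (0:ℝ)) (𝓝 (μ.rnDeriv lam x)) :=
    key.mono fun x hx => hx.comp (htend x)
  have hupper : ∀ᵐ x ∂lam, upperDeriv μ lam x = μ.rnDeriv lam x :=
    hae.mono fun x hx => hx.limsup_eq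
  constructor
  · filter_upwards [hae, hupper, Measure.rnDeriv_lt_top μ lam] with x h1 h2 h3
    rw [h2]
    exact ⟨h3, h1⟩
  · intro A hA
    obtain ⟨A', hA'sub, hA'm, hA'eq⟩ := hA.exists_measurable_subset_ae_eq
    set ν : Measure X := lam.withDensity (μ.rnDeriv lam) with hν
    have hνac : ν ≪ lam := withDensity_absolutelyContinuous _ _
    have hint : ∫⁻ x in A, upperDeriv μ lam x ∂lam = ν A' := by
      rw [Measure.restrict_congr_set hA'eq.symm,
        lintegral_congr_ae (ae_restrict_of_ae hupper), hν, withDensity_apply _ hA'm]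
    rw [hint]
    have hAdiff : lam (A \ A') = 0 := by
      have := hA'eq.symm
      rw [ae_eq_set] at this
      exact this.1
    apply le_antisymm
    · -- relPart ≤ ν A'
      obtain ⟨S, hSm, hS1, hS2⟩ := μ.mutuallySingular_singularPart lam
      have hCnull : lam (A \ (A' ∩ S)) = 0 := by
        have hsub : A \ (A' ∩ S) ⊆ (A \ A') ∪ Sᶜ := by
          intro x hx
          by_cases hxA : x ∈ A'
          · exact Or.inr fun hxS => hx.2 ⟨hxA, hxS⟩
          · exact Or.inl ⟨hx.1, hxA⟩
        have hbound : lam ((A \ A') ∪ Sᶜ) = 0 := by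
          refine le_antisymm ?_ zero_le
          calc lam ((A \ A') ∪ Sᶜ) ≤ lam (A \ A') + lam Sᶜ := measure_union_le _ _
            _ = 0 := by rw [hAdiff, hS2, add_zero]
        exact le_antisymm (hbound ▸ measure_mono hsub) zero_le
      refine le_trans (iInf_le_of_le (A' ∩ S) (iInf_le_of_le (hA'm.inter hSm)
        (iInf_le _ hCnull))) ?_
      · have hdecomp : μ (A' ∩ S) = μ.singularPart lam (A' ∩ S) + ν (A' ∩ S) := by
          conv_lhs => rw [μ.haveLebesgueDecomposition_add lam]
          simp [hν]
        rw [hdecomp]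
        have h1 : μ.singularPart lam (A' ∩ S) = 0 :=
          le_antisymm (le_trans (measure_mono inter_subset_right) hS1.le) zero_le
        rw [h1, zero_add]
        exact measure_mono inter_subset_left
    · -- ν A' ≤ relPart
      refine le_iInf fun C => le_iInf fun hCm => le_iInf fun hC0 => ?_
      have h1 : ν (A' \ C) = 0 :=
        hνac (le_antisymm (le_trans (measure_mono (diff_subset_diff_left hA'sub)) hC0.le)
          zero_le)
      calc ν A' ≤ ν (A' ∩ C) + ν (A' \ C) := measure_le_inter_add_diff _ _ _
        _ = ν (A' ∩ C) := by rw [h1, add_zero]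
        _ ≤ ν C := measure_mono inter_subset_right
        _ ≤ μ C := Measure.withDensity_rnDeriv_le μ lam C
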